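/- Let G be a block graph of order p and diameter d(G) ≥ 2. Then rn(G) ≥ (p−1)(d(G)+ε(G)) − 2L(G) + ε(G). -/

import Mathlib

open scoped Classical
set_option linter.unusedSectionVars false

namespace RadioLabeling

variable {V : Type*} [Fintype V]

/-- The diameter of a graph: maximum distance between two vertices. -/
noncomputable def diam (G : SimpleGraph V) : ℕ :=
  Finset.univ.sup fun p : V × V => G.dist p.1 p.2

/-- A vertex set `S` induces a 2-connected subgraph: the induced subgraph is connected
and contains no cut-vertex. -/
def TwoConn (G : SimpleGraph V) (S : Set V) : Prop :=
  (G.induce S).Connected ∧ ∀ v ∈ S, (S \ {v} : Set V) = ∅ ∨ (G.induce (S \ {v})).Connected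

/-- A block: a maximal 2-connected induced subgraph. -/
def IsBlock (G : SimpleGraph V) (S : Set V) : Prop :=
  TwoConn G S ∧ ∀ T : Set V, S ⊆ T → TwoConn G T → T = S

/-- A block graph: a connected graph each of whose blocks is a clique. -/
def IsBlockGraph (G : SimpleGraph V) : Prop :=
  G.Connected ∧ ∀ S : Set V, IsBlock G S → G.IsClique S

/-- The weight of `G` at `v`: the sum of distances from `v` to all vertices. -/
noncomputable def wt (G : SimpleGraph V) (v : V) : ℕ := ∑ u : V, G.dist u v

/-- The set of weight centers: vertices minimizing the weight. -/
def weightCenters (G : SimpleGraph V) : Set V := {v | ∀ u : V, wt G v ≤ wt G u}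

/-- `nCloser G v u` = number of vertices strictly closer to `v` than to `u`. -/
noncomputable def nCloser (G : SimpleGraph V) (v u : V) : ℕ :=
  (Finset.univ.filter fun z => G.dist v z < G.dist u z).card

/-- A central vertex: either the unique weight center, or (when there are at least two
weight centers) a vertex of the central block, i.e. of a block containing all weight centers. -/
def IsCentral (G : SimpleGraph V) (w : V) : Prop :=
  weightCenters G = {w} ∨
    (2 ≤ (weightCenters G).ncard ∧
      ∃ S : Set V, IsBlock G S ∧ weightCenters G ⊆ S ∧ w ∈ S)

/-- The level of a vertex: its distance to a nearest central vertex. -/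
noncomputable def level (G : SimpleGraph V) (v : V) : ℕ :=
  sInf {n | ∃ w, IsCentral G w ∧ G.dist v w = n}

/-- The total level of `G`. -/
noncomputable def totalLevel (G : SimpleGraph V) : ℕ := ∑ v : V, level G v

/-- `eps G = 1` if `G` has a unique weight center, `0` otherwise. -/
noncomputable def eps (G : SimpleGraph V) : ℕ :=
  if (weightCenters G).ncard = 1 then 1 else 0

/-- A radio labeling: `|f u - f v| ≥ diam G + 1 - dist u v` for all distinct `u`, `v`. -/
def IsRadioLabeling (G : SimpleGraph V) (f : V → ℕ) : Prop :=
  ∀ u v : V, u ≠ v → diam G + 1 ≤ G.dist u v + max (f u - f v) (f v - f u)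

/-- The span of a labeling: the maximum difference of two labels. -/
noncomputable def span (f : V → ℕ) : ℕ :=
  Finset.univ.sup fun p : V × V => f p.1 - f p.2

/-- The radio number: minimum span of a radio labeling. -/
noncomputable def rn (G : SimpleGraph V) : ℕ :=
  sInf {s | ∃ f : V → ℕ, IsRadioLabeling G f ∧ span f = s}

/-- `G` achieves the lower bound `(p-1)(d(G)+ε(G)) - 2L(G) + ε(G)` for the radio number. -/
def lbEq (G : SimpleGraph V) : Prop :=
  (rn G : ℤ) =
    ((Fintype.card V : ℤ) - 1) * ((diam G : ℤ) + (eps G : ℤ)) -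
      2 * (totalLevel G : ℤ) + (eps G : ℤ)

/-- A lower bound block graph: a block graph whose radio number equals the lower bound. -/
def IsLowerBoundBlockGraph (G : SimpleGraph V) : Prop := IsBlockGraph G ∧ lbEq G

/-- `x` lies on a `(u,v)`-geodesic. -/
def OnGeodesic (G : SimpleGraph V) (x u v : V) : Prop :=
  G.dist u v = G.dist u x + G.dist x v

/-- `x` is an ancestor of `v` (and `v` a descendent of `x`): `x` lies on the geodesic
from some central vertex to `v`. -/
def IsAncestor (G : SimpleGraph V) (x v : V) : Prop :=
  ∃ w : V, IsCentral G w ∧ OnGeodesic G x w v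

/-- `phi G u v`: the maximum level of a common ancestor of `u` and `v`. -/
noncomputable def phi (G : SimpleGraph V) (u v : V) : ℕ :=
  sSup {n | ∃ x, IsAncestor G x u ∧ IsAncestor G x v ∧ level G x = n}

/-- `delta G u v = 1` iff the `(u,v)`-geodesic contains two central vertices. -/
noncomputable def delta (G : SimpleGraph V) (u v : V) : ℕ :=
  if ∃ x y : V, x ≠ y ∧ IsCentral G x ∧ IsCentral G y ∧
      OnGeodesic G x u v ∧ OnGeodesic G y u v
    then 1 else 0

/-- `rho G u v = 0` iff the `(u,v)`-geodesic contains a central vertex or a common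
ancestor of `u` and `v`. -/
noncomputable def rho (G : SimpleGraph V) (u v : V) : ℕ :=
  if ∃ x : V, OnGeodesic G x u v ∧
      (IsCentral G x ∨ (IsAncestor G x u ∧ IsAncestor G x v))
    then 0 else 1

/-- The central block: a block containing at least two weight centers, all of them. -/
def IsCentralBlock (G : SimpleGraph V) (D : Set V) : Prop :=
  IsBlock G D ∧ 2 ≤ (weightCenters G).ncard ∧ weightCenters G ⊆ D

/-- `v` belongs to the branch of `G` determined by the non-central block `D` adjacent to the
central vertex `w`: `v` is a vertex of `D` other than `w`, or a descendent of such a vertex. -/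
def InBranch (G : SimpleGraph V) (w : V) (D : Set V) (v : V) : Prop :=
  IsCentral G w ∧ IsBlock G D ∧ w ∈ D ∧ ¬ IsCentralBlock G D ∧
    ∃ u ∈ D, u ≠ w ∧ IsAncestor G u v

/-- Two vertices are in different branches: branches induced by two different blocks
adjacent to the same central vertex. -/
def DifferentBranches (G : SimpleGraph V) (u v : V) : Prop :=
  ∃ w D₁ D₂, D₁ ≠ D₂ ∧ InBranch G w D₁ u ∧ InBranch G w D₂ v

/-- Two vertices are in opposite branches: branches induced by blocks adjacent to two
different central vertices. -/
def OppositeBranches (G : SimpleGraph V) (u v : V) : Prop :=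
  ∃ w₁ w₂ D₁ D₂, w₁ ≠ w₂ ∧ InBranch G w₁ D₁ u ∧ InBranch G w₂ D₂ v

/-- Two vertices lie in the same branch. -/
def SameBranch (G : SimpleGraph V) (u v : V) : Prop :=
  ∃ w D, InBranch G w D u ∧ InBranch G w D v


section Plumbing

variable {G : SimpleGraph V} {S T : Set V} {a b u v w x y z : V}

/-- Reachability within a vertex set. -/
def ReachIn (G : SimpleGraph V) (S : Set V) (a b : V) : Prop :=
  ∃ p : G.Walk a b, ∀ z ∈ p.support, z ∈ S

lemma ReachIn.mem_left (h : ReachIn G S a b) : a ∈ S := by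
  obtain ⟨p, hp⟩ := h; exact hp a p.start_mem_support

lemma ReachIn.mem_right (h : ReachIn G S a b) : b ∈ S := by
  obtain ⟨p, hp⟩ := h; exact hp b p.end_mem_support

lemma ReachIn.refl (ha : a ∈ S) : ReachIn G S a a :=
  ⟨SimpleGraph.Walk.nil, by simp [ha]⟩

lemma ReachIn.symm (h : ReachIn G S a b) : ReachIn G S b a := by
  obtain ⟨p, hp⟩ := h
  exact ⟨p.reverse, by simpa using hp⟩

lemma ReachIn.trans (h : ReachIn G S a b) (h' : ReachIn G S b u) : ReachIn G S a u := by
  obtain ⟨p, hp⟩ := h; obtain ⟨q, hq⟩ := h'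
  refine ⟨p.append q, fun z hz => ?_⟩
  rcases (SimpleGraph.Walk.mem_support_append_iff _ _).1 hz with h1 | h1
  · exact hp z h1
  · exact hq z h1

lemma ReachIn.mono (hST : S ⊆ T) (h : ReachIn G S a b) : ReachIn G T a b := by
  obtain ⟨p, hp⟩ := h; exact ⟨p, fun z hz => hST (hp z hz)⟩

lemma reachable_induce_aux (p : G.Walk a b) :
    ∀ (hp : ∀ z ∈ p.support, z ∈ S),
    (G.induce S).Reachable ⟨a, hp a p.start_mem_support⟩ ⟨b, hp b p.end_mem_support⟩ := by
  induction p with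
  | nil => intro hp; rfl
  | @cons c d e hadj q ih =>
    intro hp
    have hc : c ∈ S := hp c (by simp)
    have hd' : d ∈ S := hp d (by simp)
    have h1 : (G.induce S).Adj ⟨c, hc⟩ ⟨d, hd'⟩ := by
      simp only [SimpleGraph.comap_adj, Function.Embedding.coe_subtype]
      exact hadj
    exact h1.reachable.trans (ih (fun z hz => hp z (by simp [hz])))

lemma reachable_induce_of_reachIn (h : ReachIn G S a b) (ha : a ∈ S) (hb : b ∈ S) :
    (G.induce S).Reachable ⟨a, ha⟩ ⟨b, hb⟩ := by
  obtain ⟨p, hp⟩ := h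
  exact reachable_induce_aux p hp

lemma reachIn_of_reachable_induce (ha : a ∈ S) (hb : b ∈ S)
    (h : (G.induce S).Reachable ⟨a, ha⟩ ⟨b, hb⟩) : ReachIn G S a b := by
  obtain ⟨p⟩ := h
  have key : ∀ (x y : S) (q : (G.induce S).Walk x y), ReachIn G S x y := by
    intro x y q
    induction q with
    | nil => exact ReachIn.refl (Subtype.coe_prop _)
    | @cons c d e hadj q ih =>
      have h1 : G.Adj (c : V) (d : V) := by
        simpa only [SimpleGraph.comap_adj, Function.Embedding.coe_subtype] using hadj
      refine ReachIn.trans ⟨h1.toWalk, ?_⟩ ih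
      intro z hz
      simp only [SimpleGraph.Walk.support_cons, SimpleGraph.Walk.support_nil,
        List.mem_cons, List.mem_singleton] at hz
      rcases hz with rfl | hz
      · exact c.2
      · rcases hz with rfl | h; · exact d.2
        · simp at h
  exact key _ _ p

lemma induce_connected_of_hub (hh : u ∈ S) (hr : ∀ a ∈ S, ReachIn G S a u) :
    (G.induce S).Connected := by
  rw [SimpleGraph.connected_iff]
  refine ⟨?_, ⟨⟨u, hh⟩⟩⟩
  rintro ⟨a, ha⟩ ⟨b, hb⟩
  exact (reachable_induce_of_reachIn (hr a ha) ha hh).trans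
    (reachable_induce_of_reachIn ((hr b hb).symm) hh hb)

lemma reachIn_of_induce_connected (h : (G.induce S).Connected) (ha : a ∈ S) (hb : b ∈ S) :
    ReachIn G S a b :=
  reachIn_of_reachable_induce ha hb (h.preconnected _ _)

end Plumbing

section Geodesic

variable {G : SimpleGraph V} {a b u v w x y z : V}

/-- splitting a geodesic walk at a support vertex -/
lemma geo_split (hconn : G.Connected) (p : G.Walk a b) (hp : p.length = G.dist a b)
    (h : w ∈ p.support) :
    (p.takeUntil w h).length = G.dist a w ∧ (p.dropUntil w h).length = G.dist w b := by
  have hsum : (p.takeUntil w h).length + (p.dropUntil w h).length = p.length := by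
    conv_rhs => rw [← SimpleGraph.Walk.take_spec p h]
    rw [SimpleGraph.Walk.length_append]
  have h1 : G.dist a w ≤ (p.takeUntil w h).length := SimpleGraph.dist_le _
  have h2 : G.dist w b ≤ (p.dropUntil w h).length := SimpleGraph.dist_le _
  have h3 : G.dist a b ≤ G.dist a w + G.dist w b := hconn.dist_triangle
  omega

lemma geo_dist_add (hconn : G.Connected) (p : G.Walk a b) (hp : p.length = G.dist a b)
    (h : w ∈ p.support) : G.dist a w + G.dist w b = G.dist a b := by
  have hsum : (p.takeUntil w h).length + (p.dropUntil w h).length = p.length := by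
    conv_rhs => rw [← SimpleGraph.Walk.take_spec p h]
    rw [SimpleGraph.Walk.length_append]
  have := geo_split hconn p hp h
  omega

lemma mem_take_or_drop (p : G.Walk a b) (h : w ∈ p.support) (hx : x ∈ p.support) :
    x ∈ (p.takeUntil w h).support ∨ x ∈ (p.dropUntil w h).support := by
  rw [← SimpleGraph.Walk.take_spec p h, SimpleGraph.Walk.mem_support_append_iff] at hx
  exact hx

/-- on a geodesic, vertices are determined by their distance from the start -/
lemma geo_inj (hconn : G.Connected) (p : G.Walk a b) (hp : p.length = G.dist a b)
    (h1 : w ∈ p.support) (h2 : x ∈ p.support) (hd : G.dist a w = G.dist a x) : w = x := by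
  have e1 : G.dist a w + G.dist w b = G.dist a b := geo_dist_add hconn p hp h1
  have e2 : G.dist a x + G.dist x b = G.dist a b := geo_dist_add hconn p hp h2
  rcases mem_take_or_drop p h1 h2 with hc | hc
  · -- x on the prefix, a geodesic from a to w
    have htake := (geo_split hconn p hp h1).1
    have e3 : G.dist a x + G.dist x w = G.dist a w :=
      geo_dist_add hconn (p.takeUntil w h1) htake hc
    have hz : G.dist x w = 0 := by omega
    exact ((hconn.dist_eq_zero_iff).1 hz).symm
  · have hdrop := (geo_split hconn p hp h1).2
    have e3 : G.dist w x + G.dist x b = G.dist w b :=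
      geo_dist_add hconn (p.dropUntil w h1) hdrop hc
    have : G.dist w x = 0 := by omega
    exact (hconn.dist_eq_zero_iff).1 this

/-- a vertex on the suffix of a geodesic is "after" w -/
lemma geo_drop_dist (hconn : G.Connected) (p : G.Walk a b) (hp : p.length = G.dist a b)
    (h : w ∈ p.support) (hx : x ∈ (p.dropUntil w h).support) :
    G.dist a x = G.dist a w + G.dist w x := by
  have e1 : G.dist a w + G.dist w b = G.dist a b := geo_dist_add hconn p hp h
  have hdrop := (geo_split hconn p hp h).2
  have e3 : G.dist w x + G.dist x b = G.dist w b :=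
    geo_dist_add hconn (p.dropUntil w h) hdrop hx
  have e2 : G.dist a x + G.dist x b = G.dist a b :=
    geo_dist_add hconn p hp (SimpleGraph.Walk.support_dropUntil_subset p h hx)
  omega

lemma geo_take_dist (hconn : G.Connected) (p : G.Walk a b) (hp : p.length = G.dist a b)
    (h : w ∈ p.support) (hx : x ∈ (p.takeUntil w h).support) :
    G.dist a x + G.dist x w = G.dist a w := by
  have htake := (geo_split hconn p hp h).1
  exact geo_dist_add hconn (p.takeUntil w h) htake hx

end Geodesic

section TwoConnMachinery

variable {G : SimpleGraph V} {S T B B₁ B₂ : Set V} {a b u v w x y z : V}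

/-- common vertex of prefix and suffix of a path is the split vertex -/
lemma path_take_drop_inter (p : G.Walk a b) (hp : p.IsPath) (h : w ∈ p.support)
    (h1 : x ∈ (p.takeUntil w h).support) (h2 : x ∈ (p.dropUntil w h).support) : x = w := by
  have hnodup : p.support.Nodup := hp.support_nodup
  have hspec := SimpleGraph.Walk.take_spec p h
  rw [← hspec, SimpleGraph.Walk.support_append, List.nodup_append] at hnodup
  rw [SimpleGraph.Walk.support_eq_cons (p.dropUntil w h)] at h2
  rcases List.mem_cons.1 h2 with rfl | h2
  · rfl
  · exact absurd rfl (hnodup.2.2 x h1 x h2)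

/-- the set of vertices of two walks -/
def wSup (P Q : G.Walk x y) : Set V := {z | z ∈ P.support ∨ z ∈ Q.support}

lemma wSup_comm (P Q : G.Walk x y) : wSup P Q = wSup Q P := by
  ext z; exact or_comm

lemma wSup_reverse (P Q : G.Walk x y) : wSup P.reverse Q.reverse = wSup P Q := by
  ext z; simp [wSup]

lemma mem_wSup_left (P Q : G.Walk x y) (h : z ∈ P.support) : z ∈ wSup P Q := Or.inl h
lemma mem_wSup_right (P Q : G.Walk x y) (h : z ∈ Q.support) : z ∈ wSup P Q := Or.inr h

lemma wSup_connected (P Q : G.Walk x y) : (G.induce (wSup P Q)).Connected := by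
  apply induce_connected_of_hub (u := x) (Or.inl P.start_mem_support)
  rintro a (ha | ha)
  · exact ⟨(P.takeUntil a ha).reverse, fun z hz => Or.inl
      (SimpleGraph.Walk.support_takeUntil_subset _ _ (by simpa using hz))⟩
  · exact ⟨(Q.takeUntil a ha).reverse, fun z hz => Or.inr
      (SimpleGraph.Walk.support_takeUntil_subset _ _ (by simpa using hz))⟩

lemma aux_del_endpoint (P Q : G.Walk x y) (hP : P.IsPath) (hQ : Q.IsPath) (hxy : x ≠ y) :
    (G.induce (wSup P Q \ {x})).Connected := by
  apply induce_connected_of_hub (u := y)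
    (⟨Or.inl P.end_mem_support, by simpa using hxy.symm⟩ : y ∈ wSup P Q \ {x})
  rintro a ⟨ha, hax⟩
  have hax' : a ≠ x := by simpa using hax
  rcases ha with ha | ha
  · refine ⟨P.dropUntil a ha, fun z hz => ⟨Or.inl
      (SimpleGraph.Walk.support_dropUntil_subset _ _ hz), fun hzx => ?_⟩⟩
    have hzx' : z = x := hzx
    subst hzx'
    exact hax' (path_take_drop_inter P hP ha (P.takeUntil a ha).start_mem_support hz).symm
  · refine ⟨Q.dropUntil a ha, fun z hz => ⟨Or.inr
      (SimpleGraph.Walk.support_dropUntil_subset _ _ hz), fun hzx => ?_⟩⟩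
    have hzx' : z = x := hzx
    subst hzx'
    exact hax' (path_take_drop_inter Q hQ ha (Q.takeUntil a ha).start_mem_support hz).symm

lemma aux_del_internal (P Q : G.Walk x y) (hP : P.IsPath) (hQ : Q.IsPath) (hxy : x ≠ y)
    (hdisj : ∀ a, a ∈ P.support → a ∈ Q.support → a = x ∨ a = y)
    (hwP : w ∈ P.support) (hwx : w ≠ x) (hwy : w ≠ y) :
    (G.induce (wSup P Q \ {w})).Connected := by
  have hwQ : w ∉ Q.support := fun hc => by rcases hdisj w hwP hc with h | h <;> simp_all
  have hxS : x ∈ wSup P Q \ {w} := ⟨Or.inl P.start_mem_support, by simpa using hwx.symm⟩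
  have hyS : y ∈ wSup P Q \ {w} := ⟨Or.inl P.end_mem_support, by simpa using hwy.symm⟩
  have hQreach : ReachIn G (wSup P Q \ {w}) y x := by
    refine ⟨Q.reverse, fun z hz => ?_⟩
    have hz' : z ∈ Q.support := by simpa using hz
    refine ⟨Or.inr hz', fun hzw => ?_⟩
    have hzw' : z = w := hzw
    exact hwQ (hzw' ▸ hz')
  apply induce_connected_of_hub (u := x) hxS
  rintro a ⟨(ha | ha), haw⟩
  · have haw' : a ≠ w := by simpa using haw
    by_cases hwt : w ∈ (P.takeUntil a ha).support
    · -- w in prefix, go to y via suffix, then to x via Q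
      have hwd : w ∉ (P.dropUntil a ha).support := fun hc =>
        haw' (path_take_drop_inter P hP ha hwt hc).symm
      refine ReachIn.trans (⟨P.dropUntil a ha, fun z hz => ?_⟩ : ReachIn G _ a y) hQreach
      refine ⟨Or.inl (SimpleGraph.Walk.support_dropUntil_subset _ _ hz), fun hzw => ?_⟩
      have hzw' : z = w := hzw
      subst hzw'; exact hwd hz
    · refine ⟨(P.takeUntil a ha).reverse, fun z hz => ?_⟩
      have hz' : z ∈ (P.takeUntil a ha).support := by simpa using hz
      refine ⟨Or.inl (SimpleGraph.Walk.support_takeUntil_subset _ _ hz'), fun hzw => ?_⟩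
      have hzw' : z = w := hzw
      subst hzw'; exact hwt hz'
  · refine ⟨(Q.takeUntil a ha).reverse, fun z hz => ?_⟩
    have hz' : z ∈ (Q.takeUntil a ha).support := by simpa using hz
    refine ⟨Or.inr (SimpleGraph.Walk.support_takeUntil_subset _ _ hz'), fun hzw => ?_⟩
    have hzw' : z = w := hzw
    subst hzw'; exact hwQ (SimpleGraph.Walk.support_takeUntil_subset _ _ hz')

/-- Two internally disjoint paths between distinct vertices form a 2-connected set. -/
lemma twoConn_of_two_paths (P Q : G.Walk x y) (hP : P.IsPath) (hQ : Q.IsPath) (hxy : x ≠ y)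
    (hdisj : ∀ a, a ∈ P.support → a ∈ Q.support → a = x ∨ a = y) :
    TwoConn G (wSup P Q) := by
  have hdisj' : ∀ a, a ∈ Q.support → a ∈ P.support → a = x ∨ a = y := fun a h1 h2 =>
    hdisj a h2 h1
  have hdisjR : ∀ a, a ∈ P.reverse.support → a ∈ Q.reverse.support → a = y ∨ a = x := by
    intro a h1 h2
    exact (hdisj a (by simpa using h1) (by simpa using h2)).symm
  refine ⟨wSup_connected P Q, fun c hc => Or.inr ?_⟩
  by_cases hcx : c = x
  · subst hcx; exact aux_del_endpoint P Q hP hQ hxy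
  by_cases hcy : c = y
  · subst hcy
    have := aux_del_endpoint P.reverse Q.reverse (hP.reverse) (hQ.reverse) hxy.symm
    rwa [wSup_reverse] at this
  rcases hc with hc | hc
  · exact aux_del_internal P Q hP hQ hxy hdisj hc hcx hcy
  · have := aux_del_internal Q P hQ hP hxy hdisj' hc hcx hcy
    rwa [wSup_comm] at this

/-- A nonempty clique induces a connected subgraph. -/
lemma induce_connected_of_clique (hS : G.IsClique S) (hne : S.Nonempty) :
    (G.induce S).Connected := by
  obtain ⟨h, hh⟩ := hne
  apply induce_connected_of_hub hh
  intro a ha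
  by_cases hah : a = h
  · subst hah; exact ReachIn.refl ha
  · exact ⟨(hS ha hh hah).toWalk, by
      intro z hz
      simp only [SimpleGraph.Adj.toWalk, SimpleGraph.Walk.support_cons,
        SimpleGraph.Walk.support_nil, List.mem_cons, List.mem_singleton] at hz
      rcases hz with rfl | rfl | h0
      · exact ha
      · exact hh
      · simp at h0⟩

/-- A nonempty clique is 2-connected. -/
lemma twoConn_of_clique (hS : G.IsClique S) (hne : S.Nonempty) : TwoConn G S := by
  refine ⟨induce_connected_of_clique hS hne, fun v hv => ?_⟩
  rcases Set.eq_empty_or_nonempty (S \ {v}) with h | h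
  · exact Or.inl h
  · exact Or.inr (induce_connected_of_clique (hS.subset Set.diff_subset) h)

/-- Every 2-connected set extends to a block. -/
lemma exists_block_superset (hS : TwoConn G S) : ∃ B : Set V, IsBlock G B ∧ S ⊆ B := by
  classical
  set F : Finset (Finset V) :=
    Finset.univ.filter (fun t : Finset V => S ⊆ ↑t ∧ TwoConn G ↑t) with hF
  have hSF : (Set.toFinite S).toFinset ∈ F := by
    simp only [hF, Finset.mem_filter, Finset.mem_univ, true_and, Set.Finite.coe_toFinset]
    exact ⟨le_refl _, hS⟩
  obtain ⟨t, htF, hmax⟩ := F.exists_max_image (fun t => t.card) ⟨_, hSF⟩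
  simp only [hF, Finset.mem_filter, Finset.mem_univ, true_and] at htF
  refine ⟨↑t, ⟨htF.2, fun T hsub hT => ?_⟩, htF.1⟩
  have hTF : (Set.toFinite T).toFinset ∈ F := by
    simp only [hF, Finset.mem_filter, Finset.mem_univ, true_and, Set.Finite.coe_toFinset]
    exact ⟨le_trans htF.1 hsub, hT⟩
  have hcard := hmax _ hTF
  have hsub' : t ⊆ (Set.toFinite T).toFinset := by
    intro a hat
    simp only [Set.Finite.mem_toFinset]
    exact hsub hat
  have heq := Finset.eq_of_subset_of_card_le hsub' hcard
  rw [heq, Set.Finite.coe_toFinset]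

/-- In a block graph every 2-connected set is a clique. -/
lemma isClique_of_twoConn (hG : IsBlockGraph G) (hS : TwoConn G S) : G.IsClique S := by
  obtain ⟨B, hB, hSB⟩ := exists_block_superset hS
  exact (hG.2 B hB).subset hSB

/-- Two blocks sharing two vertices coincide. -/
lemma block_eq_block (hB₁ : IsBlock G B₁) (hB₂ : IsBlock G B₂)
    (hT : T ⊆ B₁) (hT' : T ⊆ B₂) (h2 : ∃ a ∈ T, ∃ b ∈ T, a ≠ b) : B₁ = B₂ := by
  have hunion : TwoConn G (B₁ ∪ B₂) := by
    obtain ⟨a, haT, b, hbT, hab⟩ := h2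
    constructor
    · apply induce_connected_of_hub (u := a) (Or.inl (hT haT))
      rintro c (hc | hc)
      · exact (reachIn_of_induce_connected hB₁.1.1 hc (hT haT)).mono Set.subset_union_left
      · exact (reachIn_of_induce_connected hB₂.1.1 hc (hT' haT)).mono Set.subset_union_right
    · intro v hv
      rw [Set.union_diff_distrib]
      -- pick a shared vertex different from v
      obtain ⟨c, hcT, hcv⟩ : ∃ c ∈ T, c ≠ v := by
        by_cases hav : a = v
        · exact ⟨b, hbT, fun h => hab (by rw [hav, h])⟩
        · exact ⟨a, haT, hav⟩
      have hc1 : c ∈ B₁ \ {v} := ⟨hT hcT, by simpa using hcv⟩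
      have hc2 : c ∈ B₂ \ {v} := ⟨hT' hcT, by simpa using hcv⟩
      have conn1 : (G.induce (B₁ \ {v})).Connected := by
        by_cases hvB : v ∈ B₁
        · rcases hB₁.1.2 v hvB with h | h
          · exact absurd hc1 (h ▸ Set.notMem_empty c)
          · exact h
        · have : B₁ \ {v} = B₁ := Set.diff_singleton_eq_self hvB
          rw [this]; exact hB₁.1.1
      have conn2 : (G.induce (B₂ \ {v})).Connected := by
        by_cases hvB : v ∈ B₂
        · rcases hB₂.1.2 v hvB with h | h
          · exact absurd hc2 (h ▸ Set.notMem_empty c)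
          · exact h
        · have : B₂ \ {v} = B₂ := Set.diff_singleton_eq_self hvB
          rw [this]; exact hB₂.1.1
      refine Or.inr (induce_connected_of_hub (u := c) (Or.inl hc1) ?_)
      rintro d (hd | hd)
      · exact (reachIn_of_induce_connected conn1 hd hc1).mono Set.subset_union_left
      · exact (reachIn_of_induce_connected conn2 hd hc2).mono Set.subset_union_right
  have h1 := hB₁.2 (B₁ ∪ B₂) Set.subset_union_left hunion
  have h2' := hB₂.2 (B₁ ∪ B₂) Set.subset_union_right hunion
  rw [← h1]; exact h2'

end TwoConnMachinery

section Star

variable {G : SimpleGraph V} {u v c z : V}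

open SimpleGraph Walk

/-- KEY LEMMA: in a block graph, any vertex `c` lying (metrically) strictly between `u` and `v`
lies on a geodesic from `u` to `z` or from `v` to `z`, for every `z`. -/
lemma star (hG : IsBlockGraph G) (hcu : c ≠ u) (hcv : c ≠ v)
    (hbet : G.dist u c + G.dist c v = G.dist u v) (z : V) :
    G.dist u z = G.dist u c + G.dist c z ∨ G.dist v z = G.dist v c + G.dist c z := by
  classical
  have hconn := hG.1
  by_contra hcon
  push_neg at hcon
  obtain ⟨h1, h2⟩ := hcon
  -- geodesics
  obtain ⟨A, hA⟩ := hconn.exists_walk_length_eq_dist u z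
  obtain ⟨B, hB⟩ := hconn.exists_walk_length_eq_dist v z
  obtain ⟨A1, hA1⟩ := hconn.exists_walk_length_eq_dist u c
  obtain ⟨A2, hA2⟩ := hconn.exists_walk_length_eq_dist c v
  set P : G.Walk u v := A1.append A2 with hPdef
  have hP : P.length = G.dist u v := by
    rw [hPdef, SimpleGraph.Walk.length_append, hA1, hA2, hbet]
  have hcP : c ∈ P.support := by
    rw [hPdef, SimpleGraph.Walk.mem_support_append_iff]
    exact Or.inr A2.start_mem_support
  have hcA : c ∉ A.support := fun hc => h1 (geo_dist_add hconn A hA hc).symm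
  have hcB : c ∉ B.support := fun hc => h2 (geo_dist_add hconn B hB hc).symm
  set W : G.Walk u v := A.append B.reverse with hWdef
  have hWsup : ∀ t, t ∈ W.support ↔ (t ∈ A.support ∨ t ∈ B.support) := by
    intro t
    rw [hWdef, SimpleGraph.Walk.mem_support_append_iff, SimpleGraph.Walk.support_reverse,
      List.mem_reverse]
  have hcW : c ∉ W.support := fun hc => by
    rcases (hWsup c).1 hc with h | h
    · exact hcA h
    · exact hcB h
  have hduc : 1 ≤ G.dist u c := hconn.pos_dist_of_ne (fun h => hcu h.symm)
  have hdcv : 1 ≤ G.dist c v := hconn.pos_dist_of_ne hcv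
  -- pick x and y
  set Tx : Finset V := Finset.univ.filter
    (fun t => t ∈ P.support ∧ t ∈ W.support ∧ G.dist u t < G.dist u c) with hTx
  set Ty : Finset V := Finset.univ.filter
    (fun t => t ∈ P.support ∧ t ∈ W.support ∧ G.dist u c < G.dist u t) with hTy
  have huTx : u ∈ Tx := by
    rw [hTx, Finset.mem_filter]
    exact ⟨Finset.mem_univ _, P.start_mem_support, W.start_mem_support, by
      rw [SimpleGraph.dist_self]; omega⟩
  have hvTy : v ∈ Ty := by
    rw [hTy, Finset.mem_filter]
    refine ⟨Finset.mem_univ _, P.end_mem_support, W.end_mem_support, ?_⟩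
    omega
  obtain ⟨x, hxTx, hxmax⟩ := Tx.exists_max_image (fun t => G.dist u t) ⟨u, huTx⟩
  obtain ⟨y, hyTy, hymin⟩ := Ty.exists_min_image (fun t => G.dist u t) ⟨v, hvTy⟩
  rw [hTx, Finset.mem_filter] at hxTx
  rw [hTy, Finset.mem_filter] at hyTy
  obtain ⟨-, hxP, hxW, hxlt⟩ := hxTx
  obtain ⟨-, hyP, hyW, hylt⟩ := hyTy
  have hxy : x ≠ y := fun h => by rw [h] at hxlt; omega
  -- y is after x on P
  have hyP1 : y ∈ (P.dropUntil x hxP).support := by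
    rcases mem_take_or_drop P hxP hyP with hy | hy
    · exfalso
      have := geo_take_dist hconn P hP hxP hy
      omega
    · exact hy
  have hP1 : (P.dropUntil x hxP).length = G.dist x v := (geo_split hconn P hP hxP).2
  have hdxy : G.dist u y = G.dist u x + G.dist x y :=
    geo_drop_dist hconn P hP hxP hyP1
  have hxy2 : 2 ≤ G.dist x y := by omega
  set P2 : G.Walk x y := (P.dropUntil x hxP).takeUntil y hyP1 with hP2def
  have hP2 : P2.length = G.dist x y := by
    have := geo_split hconn (P.dropUntil x hxP) hP1 hyP1
    exact this.1
  set Pb : G.Walk x y := P2.bypass with hPbdef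
  have hPbsub : Pb.support ⊆ P2.support := SimpleGraph.Walk.support_bypass_subset _
  have hP2subP : P2.support ⊆ P.support := fun t ht =>
    SimpleGraph.Walk.support_dropUntil_subset P hxP
      (SimpleGraph.Walk.support_takeUntil_subset _ hyP1 ht)
  -- the connection inside W
  set R0 : G.Walk x y := (W.dropUntil x hxW).append (W.dropUntil y hyW).reverse with hR0def
  have hR0sub : R0.support ⊆ W.support := by
    intro t ht
    rw [hR0def, SimpleGraph.Walk.mem_support_append_iff] at ht
    rcases ht with ht | ht
    · exact SimpleGraph.Walk.support_dropUntil_subset W hxW ht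
    · rw [SimpleGraph.Walk.support_reverse, List.mem_reverse] at ht
      exact SimpleGraph.Walk.support_dropUntil_subset W hyW ht
  set R : G.Walk x y := R0.bypass with hRdef
  have hRsub : R.support ⊆ W.support := fun t ht =>
    hR0sub (SimpleGraph.Walk.support_bypass_subset _ ht)
  -- internal disjointness
  have hdisj : ∀ a, a ∈ Pb.support → a ∈ R.support → a = x ∨ a = y := by
    intro a haPb haR
    have haP2 : a ∈ P2.support := hPbsub haPb
    have haP : a ∈ P.support := hP2subP haP2
    have haW : a ∈ W.support := hRsub haR
    have hac : a ≠ c := fun h => hcW (h ▸ haW)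
    have hane : G.dist u a ≠ G.dist u c := fun h => hac (geo_inj hconn P hP haP hcP h)
    have haP1 : a ∈ (P.dropUntil x hxP).support :=
      SimpleGraph.Walk.support_takeUntil_subset _ hyP1 haP2
    have hax : G.dist u a = G.dist u x + G.dist x a := geo_drop_dist hconn P hP hxP haP1
    rcases lt_or_gt_of_ne hane with hlt | hgt
    · -- a ∈ Tx, so dist u a ≤ dist u x, hence = and a = x
      have haTx : a ∈ Tx := by
        rw [hTx, Finset.mem_filter]; exact ⟨Finset.mem_univ _, haP, haW, hlt⟩
      have := hxmax a haTx
      have heq : G.dist u a = G.dist u x := by omega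
      exact Or.inl (geo_inj hconn P hP haP hxP heq)
    · have haTy : a ∈ Ty := by
        rw [hTy, Finset.mem_filter]; exact ⟨Finset.mem_univ _, haP, haW, hgt⟩
      have hmin := hymin a haTy
      have htake : G.dist x a + G.dist a y = G.dist x y :=
        geo_take_dist hconn (P.dropUntil x hxP) hP1 hyP1 haP2
      have heq : G.dist u a = G.dist u y := by omega
      exact Or.inr (geo_inj hconn P hP haP hyP heq)
  have htc := twoConn_of_two_paths Pb R (SimpleGraph.Walk.bypass_isPath _)
    (SimpleGraph.Walk.bypass_isPath _) hxy hdisj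
  have hclique := isClique_of_twoConn hG htc
  have hadj : G.Adj x y := hclique (mem_wSup_left Pb R Pb.start_mem_support)
    (mem_wSup_left Pb R Pb.end_mem_support) hxy
  have : G.dist x y ≤ 1 := by
    have := SimpleGraph.dist_le hadj.toWalk
    simpa using this
  omega

end Star

section Centers

variable {G : SimpleGraph V} {u v c z : V}

lemma center_count (hG : IsBlockGraph G) (hu : u ∈ weightCenters G) (hcu : c ≠ u) :
    2 * (Finset.univ.filter
      (fun z => G.dist u z = G.dist u c + G.dist c z) : Finset V).card ≤ Fintype.card V := by
  classical
  have hconn := hG.1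
  set A : Finset V := Finset.univ.filter
    (fun z => G.dist u z = G.dist u c + G.dist c z) with hAdef
  set A' : Finset V := Finset.univ.filter
    (fun z => ¬ (G.dist u z = G.dist u c + G.dist c z)) with hA'def
  set d : ℕ := G.dist u c with hd
  have hd1 : 1 ≤ d := hconn.pos_dist_of_ne (fun h => hcu h.symm)
  have hsum : (wt G u : ℤ) - (wt G c : ℤ) =
      ∑ z : V, ((G.dist z u : ℤ) - (G.dist z c : ℤ)) := by
    rw [Finset.sum_sub_distrib]
    simp [wt]
  have hsplit : ∑ z : V, ((G.dist z u : ℤ) - (G.dist z c : ℤ)) =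
      ∑ z ∈ A, ((G.dist z u : ℤ) - (G.dist z c : ℤ)) +
      ∑ z ∈ A', ((G.dist z u : ℤ) - (G.dist z c : ℤ)) := by
    rw [hAdef, hA'def, Finset.sum_filter_add_sum_filter_not]
  have hAterm : ∀ z ∈ A, ((G.dist z u : ℤ) - (G.dist z c : ℤ)) = (d : ℤ) := by
    intro z hz
    rw [hAdef, Finset.mem_filter] at hz
    have h2 := hz.2
    rw [SimpleGraph.dist_comm (u := z) (v := u), SimpleGraph.dist_comm (u := z) (v := c), h2]
    push_cast
    ring
  have hAcard : ∑ z ∈ A, ((G.dist z u : ℤ) - (G.dist z c : ℤ)) = A.card * d := by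
    rw [Finset.sum_congr rfl hAterm, Finset.sum_const, nsmul_eq_mul]
  have hBterm : ∀ z ∈ A', -(d : ℤ) ≤ ((G.dist z u : ℤ) - (G.dist z c : ℤ)) := by
    intro z _
    have htri : G.dist z c ≤ G.dist z u + G.dist u c := hconn.dist_triangle
    have hdd : G.dist u c = d := rfl
    push_cast [← hdd]
    omega
  have hBcard : (A'.card : ℤ) * (-(d:ℤ)) ≤
      ∑ z ∈ A', ((G.dist z u : ℤ) - (G.dist z c : ℤ)) := by
    have h := Finset.sum_le_sum hBterm
    rwa [Finset.sum_const, nsmul_eq_mul] at h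
  have hwle : wt G u ≤ wt G c := hu c
  have h0 : (wt G u : ℤ) - (wt G c : ℤ) ≤ 0 := by
    have : (wt G u : ℤ) ≤ (wt G c : ℤ) := Nat.cast_le.2 hwle
    omega
  have hcardsplit : A.card + A'.card = Fintype.card V := by
    rw [hAdef, hA'def, Finset.card_filter_add_card_filter_not]
    exact Finset.card_univ
  -- combine
  have hfinal : (A.card : ℤ) * d + (A'.card : ℤ) * (-(d:ℤ)) ≤ 0 := by
    rw [hsum, hsplit] at h0
    rw [hAcard] at h0
    linarith
  have hAA' : (A'.card : ℤ) = (Fintype.card V : ℤ) - A.card := by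
    have := hcardsplit
    push_cast [← this]
    ring
  rw [hAA'] at hfinal
  have hd0 : (0:ℤ) < d := by exact_mod_cast hd1
  have h2a : 2 * (A.card : ℤ) ≤ (Fintype.card V : ℤ) := by nlinarith
  exact_mod_cast h2a

/-- In a block graph, two weight centers are adjacent. -/
lemma centers_adj (hG : IsBlockGraph G) (hu : u ∈ weightCenters G)
    (hv : v ∈ weightCenters G) (huv : u ≠ v) : G.Adj u v := by
  classical
  have hconn := hG.1
  by_contra hadj
  have hd0 : G.dist u v ≠ 0 := fun h => huv ((hconn.dist_eq_zero_iff).1 h)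
  have hd1 : G.dist u v ≠ 1 := fun h => hadj (SimpleGraph.dist_eq_one_iff_adj.1 h)
  have hd2 : 2 ≤ G.dist u v := by omega
  obtain ⟨p, hp⟩ := hconn.exists_walk_length_eq_dist u v
  obtain ⟨c, hc_adj, q, rfl⟩ : ∃ (c : V) (h : G.Adj u c) (q : G.Walk c v),
      p = SimpleGraph.Walk.cons h q := by
    cases p with
    | nil => rw [SimpleGraph.Walk.length_nil] at hp; omega
    | cons h q => exact ⟨_, h, q, rfl⟩
  rw [SimpleGraph.Walk.length_cons] at hp
  have hqd : G.dist c v ≤ q.length := SimpleGraph.dist_le q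
  have hucd : G.dist u c ≤ 1 := by simpa using SimpleGraph.dist_le hc_adj.toWalk
  have htri : G.dist u v ≤ G.dist u c + G.dist c v := hconn.dist_triangle
  have hduc : G.dist u c = 1 := by
    have h0 : G.dist u c ≠ 0 := fun h => by
      have : u = c := (hconn.dist_eq_zero_iff).1 h
      exact G.loopless.irrefl u (this ▸ hc_adj)
    omega
  have hdcv : G.dist c v = G.dist u v - 1 := by omega
  have hbet : G.dist u c + G.dist c v = G.dist u v := by omega
  have hcu : c ≠ u := fun h => G.loopless.irrefl u (h ▸ hc_adj)
  have hcv : c ≠ v := fun h => by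
    rw [h, SimpleGraph.dist_self] at hdcv
    omega
  set A : Finset V := Finset.univ.filter
    (fun z => G.dist u z = G.dist u c + G.dist c z) with hAdef
  set B : Finset V := Finset.univ.filter
    (fun z => G.dist v z = G.dist v c + G.dist c z) with hBdef
  have hAB : A ∪ B = Finset.univ := by
    ext z
    simp only [Finset.mem_union, hAdef, hBdef, Finset.mem_filter, Finset.mem_univ, true_and,
      iff_true]
    exact star hG hcu hcv hbet z
  have hcAB : c ∈ A ∩ B := by
    simp only [Finset.mem_inter, hAdef, hBdef, Finset.mem_filter, Finset.mem_univ, true_and]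
    constructor <;> simp [SimpleGraph.dist_self]
  have h2A : 2 * A.card ≤ Fintype.card V := center_count hG hu hcu
  have h2B : 2 * B.card ≤ Fintype.card V := center_count hG hv hcv
  have hcards : A.card + B.card = (A ∪ B).card + (A ∩ B).card :=
    (Finset.card_union_add_card_inter A B).symm
  have hub : (A ∪ B).card = Fintype.card V := by rw [hAB]; exact Finset.card_univ
  have hib : 1 ≤ (A ∩ B).card := Finset.card_pos.2 ⟨c, hcAB⟩
  omega

end Centers

section Central

variable {G : SimpleGraph V} {u v w : V}

lemma weightCenters_nonempty [Nonempty V] (G : SimpleGraph V) :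
    (weightCenters G).Nonempty := by
  classical
  obtain ⟨v, -, hv⟩ := Finset.exists_min_image Finset.univ (wt G) ⟨Classical.arbitrary V,
    Finset.mem_univ _⟩
  exact ⟨v, fun u => hv u (Finset.mem_univ u)⟩

lemma central_iff_of_unique (hW : weightCenters G = {w}) :
    ∀ x, IsCentral G x ↔ x = w := by
  intro x
  constructor
  · rintro (h | ⟨h2, -⟩)
    · rw [hW] at h
      exact (Set.singleton_eq_singleton_iff.1 h.symm)
    · rw [hW, Set.ncard_singleton] at h2
      omega
  · rintro rfl
    exact Or.inl hW

lemma level_eq_of_unique (hconn : G.Connected) (hW : weightCenters G = {w}) (v : V) :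
    level G v = G.dist v w := by
  have hset : {n | ∃ x, IsCentral G x ∧ G.dist v x = n} = {G.dist v w} := by
    ext n
    simp only [Set.mem_setOf_eq, Set.mem_singleton_iff]
    constructor
    · rintro ⟨x, hx, rfl⟩
      rw [(central_iff_of_unique hW x).1 hx]
    · rintro rfl
      exact ⟨w, (central_iff_of_unique hW w).2 rfl, rfl⟩
  rw [level, hset, csInf_singleton]

lemma exists_central_block (hG : IsBlockGraph G) (h2 : 2 ≤ (weightCenters G).ncard) :
    ∃ B : Set V, IsBlock G B ∧ weightCenters G ⊆ B := by
  have hne : (weightCenters G).Nonempty := by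
    rcases Set.eq_empty_or_nonempty (weightCenters G) with h | h
    · rw [h, Set.ncard_empty] at h2; omega
    · exact h
  have hclique : G.IsClique (weightCenters G) := fun a ha b hb hab =>
    centers_adj hG ha hb hab
  obtain ⟨B, hB, hsub⟩ := exists_block_superset (twoConn_of_clique hclique hne)
  exact ⟨B, hB, hsub⟩

lemma central_iff_mem_block (hG : IsBlockGraph G) (h2 : 2 ≤ (weightCenters G).ncard)
    {B : Set V} (hB : IsBlock G B) (hWB : weightCenters G ⊆ B) :
    ∀ x, IsCentral G x ↔ x ∈ B := by
  have hex2 : ∃ a ∈ weightCenters G, ∃ b ∈ weightCenters G, a ≠ b := by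
    obtain ⟨a, b, ha, hb, hab⟩ := (Set.one_lt_ncard_iff
      (Set.toFinite (weightCenters G))).1 (by omega : 1 < (weightCenters G).ncard)
    exact ⟨a, ha, b, hb, hab⟩
  intro x
  constructor
  · rintro (h | ⟨-, S, hS, hWS, hxS⟩)
    · rw [h, Set.ncard_singleton] at h2; omega
    · have : B = S := block_eq_block hB hS hWB hWS hex2
      rw [this]; exact hxS
  · intro hx
    exact Or.inr ⟨h2, B, hB, hWB, hx⟩

lemma level_spec (hex : ∃ w, IsCentral G w) (v : V) :
    ∃ w, IsCentral G w ∧ G.dist v w = level G v := by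
  have hne : {n | ∃ w, IsCentral G w ∧ G.dist v w = n}.Nonempty := by
    obtain ⟨w, hw⟩ := hex
    exact ⟨G.dist v w, w, hw, rfl⟩
  exact Nat.sInf_mem hne

lemma ncard_weightCenters_pos [Nonempty V] (G : SimpleGraph V) :
    1 ≤ (weightCenters G).ncard :=
  (Set.ncard_pos (Set.toFinite _)).2 (weightCenters_nonempty G)

/-- The master distance bound: `d(u,v) + ε ≤ level u + level v + 1`. -/
lemma dist_level_bound [Nonempty V] (hG : IsBlockGraph G) (u v : V) :
    (G.dist u v : ℤ) + (eps G : ℤ) ≤ (level G u : ℤ) + (level G v : ℤ) + 1 := by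
  classical
  have hconn := hG.1
  by_cases h1 : (weightCenters G).ncard = 1
  · obtain ⟨w, hW⟩ := Set.ncard_eq_one.1 h1
    have heps : eps G = 1 := if_pos h1
    have hu := level_eq_of_unique hconn hW u
    have hv := level_eq_of_unique hconn hW v
    have htri : G.dist u v ≤ G.dist u w + G.dist w v := hconn.dist_triangle
    rw [heps, hu, hv]
    rw [SimpleGraph.dist_comm (u := v) (v := w)]
    push_cast
    omega
  · have heps : eps G = 0 := if_neg h1
    have h2 : 2 ≤ (weightCenters G).ncard := by
      have := ncard_weightCenters_pos G
      omega
    obtain ⟨B, hB, hWB⟩ := exists_central_block hG h2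
    have hiff := central_iff_mem_block hG h2 hB hWB
    have hex : ∃ w, IsCentral G w := by
      obtain ⟨a, ha⟩ : (weightCenters G).Nonempty := weightCenters_nonempty G
      exact ⟨a, (hiff a).2 (hWB ha)⟩
    obtain ⟨wu, hwu, hwud⟩ := level_spec hex u
    obtain ⟨wv, hwv, hwvd⟩ := level_spec hex v
    have hwuB : wu ∈ B := (hiff wu).1 hwu
    have hwvB : wv ∈ B := (hiff wv).1 hwv
    have hBclique : G.IsClique B := hG.2 B hB
    have hdw : G.dist wu wv ≤ 1 := by
      by_cases hww : wu = wv
      · rw [hww, SimpleGraph.dist_self]; omega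
      · have hadj := hBclique hwuB hwvB hww
        simpa using SimpleGraph.dist_le hadj.toWalk
    have htri1 : G.dist u v ≤ G.dist u wu + G.dist wu v := hconn.dist_triangle
    have htri2 : G.dist wu v ≤ G.dist wu wv + G.dist wv v := hconn.dist_triangle
    rw [heps, ← hwud, ← hwvd]
    rw [SimpleGraph.dist_comm (u := v) (v := wv)]
    push_cast
    omega

/-- When there is a unique weight center, at most one vertex has level 0. -/
lemma eps_le_level_add (hG : IsBlockGraph G) (huv : u ≠ v) :
    (eps G : ℤ) ≤ (level G u : ℤ) + (level G v : ℤ) := by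
  have hconn := hG.1
  by_cases h1 : (weightCenters G).ncard = 1
  · obtain ⟨w, hW⟩ := Set.ncard_eq_one.1 h1
    have heps : eps G = 1 := if_pos h1
    rw [heps, level_eq_of_unique hconn hW u, level_eq_of_unique hconn hW v]
    by_contra hcon
    push_neg at hcon
    have hu0 : G.dist u w = 0 := by omega
    have hv0 : G.dist v w = 0 := by omega
    exact huv ((hconn.dist_eq_zero_iff.1 hu0).trans (hconn.dist_eq_zero_iff.1 hv0).symm)
  · have heps : eps G = 0 := if_neg h1
    rw [heps]
    push_cast
    positivity

end Central

/-- For a block graph `G` of order `p` and diameter at least 2,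
`rn(G) ≥ (p-1)(d(G)+ε(G)) - 2L(G) + ε(G)`. -/
theorem stmt4 {V : Type*} [Fintype V] (G : SimpleGraph V) (hG : IsBlockGraph G)
    (hd : 2 ≤ diam G) :
    ((Fintype.card V : ℤ) - 1) * ((diam G : ℤ) + (eps G : ℤ))
        - 2 * (totalLevel G : ℤ) + (eps G : ℤ) ≤ (rn G : ℤ) := by
  classical
  have hconn := hG.1
  -- a distant pair, nonemptiness, cardinality
  have hpair : ∃ p : V × V, 2 ≤ G.dist p.1 p.2 := by
    by_contra hcon
    push_neg at hcon
    have hle : diam G ≤ 1 := Finset.sup_le (fun p _ => by have := hcon p; omega)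
    omega
  obtain ⟨⟨u₀, v₀⟩, huv2⟩ := hpair
  have hne00 : u₀ ≠ v₀ := fun h => by
    rw [h, SimpleGraph.dist_self] at huv2; omega
  haveI : Nonempty V := ⟨u₀⟩
  have hcard2 : 2 ≤ Fintype.card V := Fintype.one_lt_card_iff.2 ⟨u₀, v₀, hne00⟩
  have hdist_le_diam : ∀ a b : V, G.dist a b ≤ diam G := fun a b =>
    Finset.le_sup (f := fun p : V × V => G.dist p.1 p.2) (Finset.mem_univ (a, b))
  -- existence of a radio labeling
  have hSne : {s | ∃ f : V → ℕ, IsRadioLabeling G f ∧ span f = s}.Nonempty := by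
    refine ⟨span (fun v => (diam G + 1) * ((Fintype.equivFin V) v : ℕ)),
      (fun v => (diam G + 1) * ((Fintype.equivFin V) v : ℕ)), ?_, rfl⟩
    intro a b hab
    set i := ((Fintype.equivFin V) a : ℕ) with hi
    set j := ((Fintype.equivFin V) b : ℕ) with hj
    have hij : i ≠ j := fun h => hab ((Fintype.equivFin V).injective (Fin.ext h))
    have key : ∀ i' j' : ℕ, i' < j' →
        diam G + 1 ≤ (diam G + 1) * j' - (diam G + 1) * i' := by
      intro i' j' hlt
      have h1 : (diam G + 1) * i' + (diam G + 1) * (j' - i') = (diam G + 1) * j' := by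
        rw [← Nat.mul_add, Nat.add_sub_cancel' hlt.le]
      have h2 : diam G + 1 ≤ (diam G + 1) * (j' - i') :=
        Nat.le_mul_of_pos_right _ (by omega)
      omega
    rcases lt_or_gt_of_ne hij with h | h
    · exact le_trans (le_trans (key i j h) (le_max_right _ _)) (Nat.le_add_left _ _)
    · exact le_trans (le_trans (key j i h) (le_max_left _ _)) (Nat.le_add_left _ _)
  obtain ⟨f, hfrad, hfspan⟩ : ∃ f : V → ℕ, IsRadioLabeling G f ∧ span f = rn G :=
    Nat.sInf_mem hSne
  -- f is injective
  have hinj : Function.Injective f := by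
    intro a b hab
    by_contra hne'
    have h := hfrad a b hne'
    rw [hab, Nat.sub_self, max_self] at h
    have := hdist_le_diam a b
    omega
  set n := Fintype.card V with hn
  set s : Finset ℕ := Finset.univ.image f with hs
  have hscard : s.card = n := by
    rw [hs, Finset.card_image_of_injective _ hinj, Finset.card_univ]
  set e := s.orderIsoOfFin hscard with he
  have hex : ∀ i : Fin n, ∃ v : V, f v = ((e i : ℕ)) := by
    intro i
    obtain ⟨a, -, ha⟩ := Finset.mem_image.1 (e i).2
    exact ⟨a, ha⟩
  choose x hx using hex
  have hxmono : ∀ i j : Fin n, i < j → f (x i) < f (x j) := by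
    intro i j hij
    rw [hx i, hx j]
    exact_mod_cast e.strictMono hij
  have hxinj : Function.Injective x := by
    intro i j hij
    by_contra hne'
    rcases lt_or_gt_of_ne hne' with h | h
    · have := hxmono i j h; rw [hij] at this; omega
    · have := hxmono j i h; rw [hij] at this; omega
  have hxbij : Function.Bijective x :=
    (Fintype.bijective_iff_injective_and_card x).2 ⟨hxinj, by rw [Fintype.card_fin]⟩
  have hlevelsum : ∑ i : Fin n, (level G (x i) : ℤ) = (totalLevel G : ℤ) := by
    rw [totalLevel]
    push_cast
    exact Fintype.sum_bijective x hxbij _ _ (fun i => rfl)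
  have hn1 : n - 1 < n := by omega
  have hminlt : ∀ k : ℕ, min k (n-1) < n := fun k =>
    lt_of_le_of_lt (min_le_right _ _) hn1
  set X : ℕ → V := fun k => x ⟨min k (n-1), hminlt k⟩ with hX
  have hXk : ∀ k (hk : k ≤ n - 1), X k = x ⟨k, by omega⟩ := by
    intro k hk
    have hfin : (⟨min k (n-1), hminlt k⟩ : Fin n) = ⟨k, by omega⟩ :=
      Fin.ext (by simpa using min_eq_left hk)
    exact congrArg x hfin
  set F : ℕ → ℤ := fun k => (f (X k) : ℤ) with hF
  have htel : ∑ k ∈ Finset.range (n-1), (F (k+1) - F k) = F (n-1) - F 0 :=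
    Finset.sum_range_sub F (n-1)
  -- each gap is at least diam + eps - levels
  have hterm : ∀ k ∈ Finset.range (n-1),
      (diam G : ℤ) + (eps G : ℤ) - (level G (X k) : ℤ) - (level G (X (k+1)) : ℤ)
        ≤ F (k+1) - F k := by
    intro k hk
    rw [Finset.mem_range] at hk
    have hne2 : X k ≠ X (k+1) := by
      rw [hXk k (by omega), hXk (k+1) (by omega)]
      intro hcon
      have h2 : k = k + 1 := by simpa using hxinj hcon
      omega
    have hflt : f (X k) < f (X (k+1)) := by
      rw [hXk k (by omega), hXk (k+1) (by omega)]
      exact hxmono _ _ (by simp [Fin.lt_def])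
    have hrad := hfrad (X k) (X (k+1)) hne2
    have hmax : max (f (X k) - f (X (k+1))) (f (X (k+1)) - f (X k))
        = f (X (k+1)) - f (X k) := by
      rw [Nat.sub_eq_zero_of_le hflt.le]
      exact max_eq_right (Nat.zero_le _)
    rw [hmax] at hrad
    have hrad' : (diam G : ℤ) + 1 ≤ (G.dist (X k) (X (k+1)) : ℤ) + (F (k+1) - F k) := by
      have hcast : ((f (X (k+1)) - f (X k) : ℕ) : ℤ) = F (k+1) - F k := by
        rw [Nat.cast_sub hflt.le]
      rw [← hcast]
      exact_mod_cast hrad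
    have hdlb := dist_level_bound hG (X k) (X (k+1))
    linarith
  have hsumterm : ∑ k ∈ Finset.range (n-1),
      ((diam G : ℤ) + (eps G : ℤ) - (level G (X k) : ℤ) - (level G (X (k+1)) : ℤ))
        ≤ F (n-1) - F 0 := by
    rw [← htel]
    exact Finset.sum_le_sum hterm
  -- level sums
  have hLsum : ∑ k ∈ Finset.range n, (level G (X k) : ℤ) = (totalLevel G : ℤ) := by
    rw [← hlevelsum, ← Fin.sum_univ_eq_sum_range (fun k => (level G (X k) : ℤ)) n]
    apply Finset.sum_congr rfl
    intro i _
    have : X (i : ℕ) = x i := by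
      rw [hXk (i : ℕ) (by omega)]
    rw [this]
  have hsplit1 : ∑ k ∈ Finset.range (n-1), (level G (X k) : ℤ)
      = (totalLevel G : ℤ) - (level G (X (n-1)) : ℤ) := by
    have h := Finset.sum_range_succ (fun k => (level G (X k) : ℤ)) (n-1)
    rw [show n - 1 + 1 = n by omega, hLsum] at h
    linarith
  have hsplit2 : ∑ k ∈ Finset.range (n-1), (level G (X (k+1)) : ℤ)
      = (totalLevel G : ℤ) - (level G (X 0) : ℤ) := by
    have h := Finset.sum_range_succ' (fun k => (level G (X k) : ℤ)) (n-1)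
    rw [show n - 1 + 1 = n by omega, hLsum] at h
    linarith
  have hends : (eps G : ℤ) ≤ (level G (X 0) : ℤ) + (level G (X (n-1)) : ℤ) := by
    apply eps_le_level_add hG
    rw [hXk 0 (by omega), hXk (n-1) (by omega)]
    intro hcon
    have h2 : (0 : ℕ) = n - 1 := (by simpa using hxinj hcon : n - 1 = 0).symm
    omega
  -- span bounds rn
  have hspan : F (n-1) - F 0 ≤ (rn G : ℤ) := by
    rw [← hfspan]
    have hle : f (X (n-1)) - f (X 0) ≤ span f :=
      Finset.le_sup (f := fun p : V × V => f p.1 - f p.2) (Finset.mem_univ (X (n-1), X 0))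
    have hmono : f (X 0) ≤ f (X (n-1)) := by
      rw [hXk 0 (by omega), hXk (n-1) (by omega)]
      exact (hxmono _ _ (by simp [Fin.lt_def]; omega)).le
    have hcast : ((f (X (n-1)) - f (X 0) : ℕ) : ℤ) = F (n-1) - F 0 := by
      rw [Nat.cast_sub hmono]
    rw [← hcast]
    exact_mod_cast hle
  -- evaluate the lower bound sum
  have hsumeval : ∑ k ∈ Finset.range (n-1),
      ((diam G : ℤ) + (eps G : ℤ) - (level G (X k) : ℤ) - (level G (X (k+1)) : ℤ))
      = ((n : ℤ) - 1) * ((diam G : ℤ) + (eps G : ℤ))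
        - (∑ k ∈ Finset.range (n-1), (level G (X k) : ℤ))
        - (∑ k ∈ Finset.range (n-1), (level G (X (k+1)) : ℤ)) := by
    rw [Finset.sum_sub_distrib, Finset.sum_sub_distrib, Finset.sum_const, Finset.card_range]
    have : ((n - 1 : ℕ) : ℤ) = (n : ℤ) - 1 := by
      omega
    rw [nsmul_eq_mul, this]
  rw [hsumeval, hsplit1, hsplit2] at hsumterm
  have hfinal : ((n : ℤ) - 1) * ((diam G : ℤ) + (eps G : ℤ))
      - 2 * (totalLevel G : ℤ) + (eps G : ℤ) ≤ (rn G : ℤ) := by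
    linarith
  exact hfinal

end RadioLabeling
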